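/- Every prime number p belongs to the Eratosthenes ray r_{n} for exactly one non-prime seed n ∈ ℕ \ P with n ≥ 1; that is, the set of primes is the disjoint union over non-prime seeds n of the rays r_n. -/
import Mathlib


noncomputable def E (n : ℕ) : ℕ := Nat.nth Nat.Prime (n - 1)

def ray (n : ℕ) : Set ℕ := {x | ∃ k : ℕ, 1 ≤ k ∧ E^[k] n = x}

lemma E_prime (n : ℕ) : (E n).Prime := Nat.prime_nth_prime _

lemma nth_prime_ge (k : ℕ) : k + 2 ≤ Nat.nth Nat.Prime k := by
  induction k with
  | zero => simp [Nat.nth_zero, Nat.Subtype.coe_bot]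
            exact (Nat.sInf_le (by norm_num)).antisymm
              (le_csInf ⟨2, by norm_num⟩ fun b hb => hb.two_le) |>.ge
  | succ k ih =>
      have h : Nat.nth Nat.Prime k < Nat.nth Nat.Prime (k+1) :=
        (Nat.nth_lt_nth Nat.infinite_setOf_prime).2 (by omega)
      omega

lemma E_gt (n : ℕ) (hn : 1 ≤ n) : n < E n := by
  have := nth_prime_ge (n - 1)
  unfold E; omega

lemma E_inj {a b : ℕ} (ha : 1 ≤ a) (hb : 1 ≤ b) (h : E a = E b) : a = b := by
  have := Nat.nth_injective Nat.infinite_setOf_prime h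
  omega

/-- the predecessor index of a prime -/
noncomputable def D (p : ℕ) : ℕ := Nat.count Nat.Prime p + 1

lemma E_D (p : ℕ) (hp : p.Prime) : E (D p) = p := by
  unfold E D
  simpa using Nat.nth_count hp

lemma D_pos (p : ℕ) : 1 ≤ D p := Nat.le_add_left 1 _

lemma D_lt (p : ℕ) (hp : p.Prime) : D p < p := by
  have h1 := E_gt (D p) (D_pos p)
  rw [E_D p hp] at h1; exact h1

lemma iter_pos (n k : ℕ) (hn : 1 ≤ n) : 1 ≤ E^[k] n := by
  induction k with
  | zero => simpa
  | succ k ih => rw [Function.iterate_succ_apply']; exact (E_prime _).two_le.trans' (by norm_num)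

lemma iter_prime (n k : ℕ) (hk : 1 ≤ k) : (E^[k] n).Prime := by
  obtain ⟨j, rfl⟩ := Nat.exists_eq_add_of_le hk
  rw [add_comm, Function.iterate_succ_apply']
  exact E_prime _

theorem prime_in_unique_ray (p : ℕ) (hp : p.Prime) :
    ∃! n : ℕ, 1 ≤ n ∧ ¬ n.Prime ∧ p ∈ ray n := by
  induction p using Nat.strong_induction_on with
  | _ p ih =>
  by_cases hq : (D p).Prime
  · -- recurse
    obtain ⟨n, ⟨hn1, hn2, k, hk, hkn⟩, huniq⟩ := ih (D p) (D_lt p hp) hq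
    refine ⟨n, ⟨hn1, hn2, k + 1, by omega, ?_⟩, ?_⟩
    · rw [Function.iterate_succ_apply', hkn, E_D p hp]
    · rintro n' ⟨hn'1, hn'2, k', hk', hkn'⟩
      rcases Nat.lt_or_ge k' 2 with h2 | h2
      · interval_cases k'
        simp only [Function.iterate_one] at hkn'
        have : n' = D p := E_inj hn'1 (D_pos p) (by rw [hkn', E_D p hp])
        exact absurd (this ▸ hq) hn'2
      · have hkn'' : E (E^[k'-1] n') = p := by
          have h := Function.iterate_succ_apply' E (k'-1) n'
          rw [← h, show (k'-1).succ = k' by omega]; exact hkn'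
        have heq : E^[k'-1] n' = D p :=
          E_inj (iter_pos n' _ hn'1) (D_pos p) (by rw [hkn'', E_D p hp])
        exact huniq n' ⟨hn'1, hn'2, k' - 1, by omega, heq⟩
  · -- D p is the seed
    refine ⟨D p, ⟨D_pos p, hq, 1, le_refl 1, by simpa using E_D p hp⟩, ?_⟩
    rintro n' ⟨hn'1, hn'2, k', hk', hkn'⟩
    rcases Nat.lt_or_ge k' 2 with h2 | h2
    · interval_cases k'
      simp only [Function.iterate_one] at hkn'
      exact E_inj hn'1 (D_pos p) (by rw [hkn', E_D p hp])
    · have hkn'' : E (E^[k'-1] n') = p := by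
        have h := Function.iterate_succ_apply' E (k'-1) n'
        rw [← h, show (k'-1).succ = k' by omega]; exact hkn'
      have heq : E^[k'-1] n' = D p :=
        E_inj (iter_pos n' _ hn'1) (D_pos p) (by rw [hkn'', E_D p hp])
      exact absurd (heq ▸ iter_prime n' (k'-1) (by omega)) hq
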